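/- Let n ≥ 3. Then Q_{A(ℤ[i],n)} ≥ 4n − 10: for every ε > 0 and every real bound B there exist Gaussian integers a₁, …, aₙ, all nonzero, such that (Z) a₁ + … + aₙ = 0; (S1) there is no vector (b₁,…,bₙ) ∈ {0,1}ⁿ with bᵢ = 0 for some i and bⱼ = 1 for some j and b₁a₁ + … + bₙaₙ = 0; (G1) there exist u₁,…,uₙ ∈ ℤ[i] with u₁a₁ + … + uₙaₙ = 1; and moreover max(N(a₁),…,N(aₙ)) > B and log(max(N(a₁),…,N(aₙ))) ≥ (4n − 10 − ε) · log(rad(N(a₁·…·aₙ))). -/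

import Mathlib

/-- The radical of a natural number: the product of its distinct prime factors. -/
def rad (m : ℕ) : ℕ := ∏ p ∈ m.primeFactors, p

/-- The norm of a Gaussian integer `z = a + b i` as a natural number, `N(z) = a² + b²`. -/
def gNorm (z : GaussianInt) : ℕ := (Zsqrtd.norm z).natAbs


/-- Coefficients: `y^n + (1-y)^n = ∑ j, v n j * (y^2-y)^j`. -/
def v : ℕ → ℕ → ℕ
  | 0, 0 => 2
  | 1, 0 => 1
  | 0, _+1 => 0
  | 1, _+1 => 0
  | n+2, 0 => v (n+1) 0
  | n+2, j+1 => v (n+1) (j+1) + v n j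

lemma v_zero_of_lt : ∀ n j : ℕ, n < 2 * j → v n j = 0 := by
  intro n
  induction n using Nat.twoStepInduction with
  | zero => intro j h; match j, h with | j+1, _ => rfl
  | one => intro j h; match j, h with | j+1, _ => rfl
  | more n ih1 ih2 =>
    intro j h
    match j, h with
    | j+1, h =>
      show v (n+1) (j+1) + v n j = 0
      rw [ih2 (j+1) (by omega), ih1 j (by omega)]

lemma v_zero_right : ∀ n : ℕ, 1 ≤ n → v n 0 = 1 := by
  intro n
  induction n using Nat.twoStepInduction with
  | zero => omega
  | one => intro _; rfl
  | more n ih1 ih2 =>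
    intro _
    show v (n+1) 0 = 1
    cases n with
    | zero => rfl
    | succ n => exact ih2 (by omega)

lemma v_pos : ∀ n j : ℕ, 2 * j ≤ n → 1 ≤ v n j := by
  intro n
  induction n using Nat.twoStepInduction with
  | zero => intro j h; match j, h with | 0, _ => exact one_le_two
  | one => intro j h; match j, h with | 0, _ => exact le_refl 1
  | more n ih1 ih2 =>
    intro j h
    match j with
    | 0 =>
      show 1 ≤ v (n+1) 0
      exact ih2 0 (by omega)
    | j+1 =>
      show 1 ≤ v (n+1) (j+1) + v n j
      have := ih1 j (by omega)
      omega

lemma v_identity : ∀ (n : ℕ) (y : ℤ),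
    (∑ j ∈ Finset.range (n+1), (v n j : ℤ) * (y^2 - y)^j) = y^n + (1-y)^n := by
  intro n
  induction n using Nat.twoStepInduction with
  | zero => intro y; simp [v]
  | one => intro y; simp [v, Finset.sum_range_succ]
  | more n ih1 ih2 =>
    intro y
    have hsplit : (∑ j ∈ Finset.range (n+3), (v (n+2) j : ℤ) * (y^2 - y)^j)
        = (∑ j ∈ Finset.range (n+3), (v (n+1) j : ℤ) * (y^2 - y)^j)
          + (∑ j ∈ Finset.range (n+3),
              (if j = 0 then 0 else (v n (j-1) : ℤ) * (y^2 - y)^j)) := by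
      rw [← Finset.sum_add_distrib]
      refine Finset.sum_congr rfl fun j _ => ?_
      match j with
      | 0 => show ((v (n+1) 0 : ℕ) : ℤ) * _ = _; simp
      | j+1 =>
        show ((v (n+1) (j+1) + v n j : ℕ) : ℤ) * _ = _
        push_cast
        simp [add_mul]
    have h2 : (∑ j ∈ Finset.range (n+3),
          (if j = 0 then 0 else (v n (j-1) : ℤ) * (y^2 - y)^j))
        = (y^2 - y) * ∑ j ∈ Finset.range (n+2), (v n j : ℤ) * (y^2 - y)^j := by
      rw [Finset.sum_range_succ' (fun j => if j = 0 then 0 else (v n (j-1) : ℤ) * (y^2 - y)^j)]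
      have hterm : ∀ x : ℕ, (if x+1 = 0 then (0:ℤ) else (v n (x+1-1) : ℤ) * (y^2 - y)^(x+1))
          = (y^2 - y) * ((v n x : ℤ) * (y^2 - y)^x) := by
        intro x
        rw [if_neg (Nat.succ_ne_zero x)]
        simp only [Nat.add_sub_cancel]
        ring
      simp only [hterm, if_pos rfl, ite_true, add_zero, ← Finset.mul_sum]
    have h1 : (∑ j ∈ Finset.range (n+3), (v (n+1) j : ℤ) * (y^2 - y)^j)
        = ∑ j ∈ Finset.range (n+2), (v (n+1) j : ℤ) * (y^2 - y)^j := by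
      rw [Finset.sum_range_succ, v_zero_of_lt (n+1) (n+2) (by omega)]
      simp
    have h3 : (∑ j ∈ Finset.range (n+2), (v n j : ℤ) * (y^2 - y)^j)
        = ∑ j ∈ Finset.range (n+1), (v n j : ℤ) * (y^2 - y)^j := by
      rw [Finset.sum_range_succ, v_zero_of_lt n (n+1) (by omega)]
      simp
    rw [hsplit, h1, h2, h3, ih2, ih1]
    ring

lemma rad_one_le (x : ℕ) : 1 ≤ rad x :=
  Finset.one_le_prod' fun p hp => (Nat.prime_of_mem_primeFactors hp).one_lt.le

lemma rad_le_of_dvd {x X : ℕ} (hX : X ≠ 0) (h : x ∣ X) : rad x ≤ rad X :=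
  Finset.prod_le_prod_of_subset_of_one_le' (Nat.primeFactors_mono h hX)
    (fun p hp _ => (Nat.prime_of_mem_primeFactors hp).one_lt.le)

lemma rad_le_self {x : ℕ} (hx : x ≠ 0) : rad x ≤ x :=
  Nat.le_of_dvd (Nat.pos_of_ne_zero hx) (Nat.prod_primeFactors_dvd x)

lemma rad_mul_le {a b : ℕ} (ha : a ≠ 0) (hb : b ≠ 0) : rad (a * b) ≤ rad a * rad b := by
  unfold rad
  rw [Nat.primeFactors_mul ha hb, ← Finset.union_sdiff_self_eq_union,
    Finset.prod_union Finset.sdiff_disjoint.symm]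
  refine Nat.mul_le_mul le_rfl ?_
  exact Finset.prod_le_prod_of_subset_of_one_le' (Finset.sdiff_subset)
    (fun p hp _ => (Nat.prime_of_mem_primeFactors hp).one_lt.le)

lemma rad_pow {x : ℕ} (e : ℕ) (he : e ≠ 0) : rad (x ^ e) = rad x := by
  unfold rad
  rw [Nat.primeFactors_pow x he]

lemma rad_two_pow {e : ℕ} (he : e ≠ 0) : rad (2 ^ e) = 2 := by
  rw [rad_pow e he]
  unfold rad
  rw [Nat.Prime.primeFactors Nat.prime_two, Finset.prod_singleton]

lemma gNorm_intCast (x : ℤ) : gNorm ((x : ℤ) : GaussianInt) = x.natAbs ^ 2 := by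
  unfold gNorm
  rw [show ((x : GaussianInt).norm) = x * x by simp [Zsqrtd.norm], Int.natAbs_mul, sq]

lemma intCast_gaussian_inj {x y : ℤ} (h : (x : GaussianInt) = (y : GaussianInt)) : x = y := by
  have := congrArg Zsqrtd.re h
  simpa using this

/-- `Q_{A(ℤ[i],n)} ≥ 4n - 10` for every `n ≥ 3`. -/
theorem quality_A_gaussian_ge (n : ℕ) (hn : 3 ≤ n) (ε : ℝ) (hε : 0 < ε) (B : ℝ) :
    ∃ a : Fin n → GaussianInt,
      (∀ i, a i ≠ 0) ∧
      (∑ i, a i = 0) ∧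
      (¬ ∃ b : Fin n → ℤ, (∀ i, b i = 0 ∨ b i = 1) ∧
        (∃ i, b i = 0) ∧ (∃ j, b j = 1) ∧ (∑ i, (b i : GaussianInt) * a i) = 0) ∧
      (∃ u : Fin n → GaussianInt, (∑ i, u i * a i) = 1) ∧
      B < ((Finset.univ.sup fun i => gNorm (a i) : ℕ) : ℝ) ∧
      (4 * (n : ℝ) - 10 - ε) * Real.log (rad (gNorm (∏ i, a i))) ≤
        Real.log ((Finset.univ.sup fun i => gNorm (a i) : ℕ)) := by
  obtain ⟨m, rfl⟩ : ∃ m, n = m + 3 := ⟨n - 3, by omega⟩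
  -- the constant C = product of the coefficients
  set C : ℕ := ∏ j ∈ Finset.range (m+1), v (2*m+1) j with hCdef
  have hC : 1 ≤ C := Finset.one_le_prod' fun j hj =>
    v_pos (2*m+1) j (by simp only [Finset.mem_range] at hj; omega)
  set D : ℕ := 2 * C with hDdef
  have hD : 1 ≤ D := by omega
  have hD' : (1:ℝ) ≤ (D:ℝ) := by exact_mod_cast hD
  have hlogD : 0 ≤ Real.log D := Real.log_nonneg hD'
  have hlog2 : (0:ℝ) < Real.log 2 := Real.log_pos one_lt_two
  -- choose the parameter k
  obtain ⟨M, hM⟩ := exists_nat_gt B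
  obtain ⟨K, hK⟩ := exists_nat_ge ((4*((m:ℝ)+3) - 10) * Real.log D / (ε * Real.log 2))
  set k : ℕ := max (max M K) 1 with hkdef
  have hk1 : 1 ≤ k := le_max_right _ _
  have hkM : M ≤ k := le_trans (le_max_left _ _) (le_max_left _ _)
  have hkK : K ≤ k := le_trans (le_max_right _ _) (le_max_left _ _)
  set y : ℤ := 2 ^ k with hydef
  have hy2 : (2:ℤ) ≤ y := by
    calc (2:ℤ) = 2^1 := (pow_one 2).symm
    _ ≤ 2^k := pow_le_pow_right₀ one_le_two hk1
  set t : ℤ := y ^ 2 - y with htdef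
  have ht2 : 2 ≤ t := by nlinarith
  -- the integer tuple
  set aN : ℕ → ℤ := fun i => if i ≤ m then (v (2*m+1) i : ℤ) * t ^ i
    else if i = m+1 then (y-1)^(2*m+1) else -y^(2*m+1) with haNdef
  set a : Fin (m+3) → GaussianInt := fun i => ((aN (i:ℕ) : ℤ) : GaussianInt) with hadef
  -- basic facts about aN
  have haN_le : ∀ i : ℕ, i ≤ m → aN i = (v (2*m+1) i : ℤ) * t ^ i := by
    intro i hi; simp [haNdef, hi]
  have haN_m1 : aN (m+1) = (y-1)^(2*m+1) := by
    simp [haNdef]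
  have haN_last : aN (m+2) = -y^(2*m+1) := by
    have h1 : ¬ (m+2 ≤ m) := by omega
    have h2 : ¬ (m+2 = m+1) := by omega
    simp [haNdef, h1, h2]
  have haN_pos : ∀ i : ℕ, i < m+2 → 0 < aN i := by
    intro i hi
    by_cases h : i ≤ m
    · rw [haN_le i h]
      have hv := v_pos (2*m+1) i (by omega)
      have hv' : (1:ℤ) ≤ (v (2*m+1) i : ℤ) := by exact_mod_cast hv
      have : (0:ℤ) < t ^ i := pow_pos (by omega) i
      nlinarith
    · have : i = m+1 := by omega
      rw [this, haN_m1]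
      exact pow_pos (by omega) _
  have haN_ne : ∀ i : ℕ, i < m+3 → aN i ≠ 0 := by
    intro i hi
    by_cases h : i < m+2
    · exact (haN_pos i h).ne'
    · have : i = m+2 := by omega
      rw [this, haN_last]
      have : (0:ℤ) < y^(2*m+1) := pow_pos (by omega) _
      omega
  -- the sum is zero
  have hodd : (1 - y)^(2*m+1) = -((y-1)^(2*m+1)) := by
    rw [show (1 - y) = -(y-1) by ring, Odd.neg_pow ⟨m, by omega⟩]
  have hsumN : ∑ i ∈ Finset.range (m+3), aN i = 0 := by
    rw [Finset.sum_range_succ, Finset.sum_range_succ]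
    have h1 : ∑ i ∈ Finset.range (m+1), aN i
        = ∑ j ∈ Finset.range (m+1), (v (2*m+1) j : ℤ) * t ^ j :=
      Finset.sum_congr rfl fun j hj => by
        simp only [Finset.mem_range] at hj
        exact haN_le j (by omega)
    have h2 : ∑ j ∈ Finset.range (m+1), (v (2*m+1) j : ℤ) * t ^ j
        = y^(2*m+1) + (1-y)^(2*m+1) := by
      rw [← v_identity (2*m+1) y]
      apply Finset.sum_subset (Finset.range_subset_range.mpr (by omega))
      intro x hx hnx
      simp only [Finset.mem_range] at hx hnx
      rw [v_zero_of_lt (2*m+1) x (by omega)]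
      simp
    rw [h1, h2, haN_m1, haN_last, hodd]
    ring
  -- the sum over Fin
  have hsumFin : ∑ i : Fin (m+3), aN (i:ℕ) = 0 := by
    rw [Fin.sum_univ_eq_sum_range (fun j => aN j) (m+3)]
    exact hsumN
  have hsup_ge : (2:ℕ)^(k*(4*(m+3)-10)) ≤ Finset.univ.sup (fun i => gNorm (a i)) := by
    refine le_trans (le_of_eq ?_)
      (Finset.le_sup (f := fun i => gNorm (a i)) (Finset.mem_univ (⟨m+2, by omega⟩ : Fin (m+3))))
    show (2:ℕ)^(k*(4*(m+3)-10)) = gNorm ((aN (m+2) : ℤ) : GaussianInt)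
    rw [gNorm_intCast, haN_last, Int.natAbs_neg, Int.natAbs_pow]
    rw [show (y.natAbs) = 2^k from by rw [hydef, Int.natAbs_pow]; rfl]
    rw [← pow_mul, ← pow_mul]
    congr 1
    rw [show 4*(m+3)-10 = 2*m*2+2 by omega]
    ring
  refine ⟨a, ?_, ?_, ?_, ?_, ?_, ?_⟩
  · -- nonzero
    intro i hcon
    apply haN_ne (i:ℕ) i.isLt
    have : ((aN (i:ℕ) : ℤ) : GaussianInt) = ((0:ℤ) : GaussianInt) := by
      rw [show ((0:ℤ) : GaussianInt) = 0 from Int.cast_zero]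
      exact hcon
    exact intCast_gaussian_inj this
  · -- sum zero
    show ∑ i : Fin (m+3), ((aN (i:ℕ) : ℤ) : GaussianInt) = 0
    rw [← Int.cast_sum, hsumFin, Int.cast_zero]
  · -- no vanishing subsums
    rintro ⟨b, hb01, ⟨i0, hi0⟩, ⟨j1, hj1⟩, hbsum⟩
    have hbZ : ∑ i : Fin (m+3), b i * aN (i:ℕ) = 0 := by
      apply intCast_gaussian_inj (y := 0)
      rw [Int.cast_sum, Int.cast_zero]
      rw [← hbsum]
      refine Finset.sum_congr rfl fun i _ => ?_
      push_cast
      rfl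
    have keypos : ∀ c : Fin (m+3) → ℤ, (∀ i, c i = 0 ∨ c i = 1) →
        c ⟨m+2, by omega⟩ = 0 → (∃ j, c j = 1) →
        0 < ∑ i : Fin (m+3), c i * aN (i:ℕ) := by
      rintro c hc hlast ⟨j, hj⟩
      have hne : ∀ i : Fin (m+3), c i = 1 → (i:ℕ) < m+2 := by
        intro i hi1
        by_contra hcon
        have hieq : i = ⟨m+2, by omega⟩ := by
          apply Fin.ext
          show (i:ℕ) = m+2
          have := i.isLt
          omega
        rw [hieq, hlast] at hi1
        omega
      apply Finset.sum_pos'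
      · intro i _
        rcases hc i with h0 | h1
        · rw [h0, zero_mul]
        · rw [h1, one_mul]
          exact (haN_pos i (hne i h1)).le
      · refine ⟨j, Finset.mem_univ j, ?_⟩
        rw [hj, one_mul]
        exact haN_pos j (hne j hj)
    rcases hb01 ⟨m+2, by omega⟩ with hL0 | hL1
    · exact (keypos b hb01 hL0 ⟨j1, hj1⟩).ne' hbZ
    · have hbZ' : ∑ i : Fin (m+3), (1 - b i) * aN (i:ℕ) = 0 := by
        have hsplit : ∑ i : Fin (m+3), (1 - b i) * aN (i:ℕ)
            = ∑ i : Fin (m+3), aN (i:ℕ) - ∑ i : Fin (m+3), b i * aN (i:ℕ) := by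
          rw [← Finset.sum_sub_distrib]
          exact Finset.sum_congr rfl fun i _ => by ring
        rw [hsplit, hsumFin, hbZ, sub_zero]
      have hc01 : ∀ i, (1 - b i) = 0 ∨ (1 - b i) = 1 := by
        intro i; rcases hb01 i with h | h <;> rw [h] <;> simp
      have hclast : (1 - b ⟨m+2, by omega⟩) = 0 := by rw [hL1]; ring
      have hcj : ∃ j, (1 - b j) = 1 := ⟨i0, by rw [hi0]; ring⟩
      exact (keypos _ hc01 hclast hcj).ne' hbZ'
  · -- Bezout
    refine ⟨fun i => if i = ⟨0, by omega⟩ then 1 else 0, ?_⟩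
    have : ∑ i : Fin (m+3), (if i = ⟨0, by omega⟩ then (1:GaussianInt) else 0) * a i
        = a ⟨0, by omega⟩ := by
      rw [Finset.sum_eq_single (⟨0, by omega⟩ : Fin (m+3))]
      · rw [if_pos rfl, one_mul]
      · intro c _ hc
        rw [if_neg hc, zero_mul]
      · intro h
        exact absurd (Finset.mem_univ _) h
    rw [this]
    show ((aN 0 : ℤ) : GaussianInt) = 1
    rw [haN_le 0 (by omega), v_zero_right (2*m+1) (by omega)]
    simp
  · -- B < sup
    have h1 : ((2:ℕ)^(k*(4*(m+3)-10)) : ℝ) ≤ ((Finset.univ.sup fun i => gNorm (a i) : ℕ) : ℝ) := by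
      exact_mod_cast hsup_ge
    refine lt_of_lt_of_le ?_ h1
    have hM2 : M < 2^M := Nat.lt_two_pow_self
    have hMk : (2:ℕ)^M ≤ 2^(k*(4*(m+3)-10)) := by
      apply Nat.pow_le_pow_right (by omega)
      calc M ≤ k := hkM
      _ = k * 1 := (mul_one k).symm
      _ ≤ k*(4*(m+3)-10) := Nat.mul_le_mul_left k (by omega)
    refine lt_of_lt_of_le hM ?_
    exact_mod_cast le_trans hM2.le hMk
  · -- the quality inequality
    have h2k : (2:ℕ) ≤ 2^k := by
      calc (2:ℕ) = 2^1 := (pow_one 2).symm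
      _ ≤ 2^k := Nat.pow_le_pow_right (by omega) hk1
    have hprod : (∏ i : Fin (m+3), a i) = ((∏ i : Fin (m+3), aN (i:ℕ) : ℤ) : GaussianInt) := by
      rw [Int.cast_prod]
    set P : ℤ := ∏ i : Fin (m+3), aN (i:ℕ) with hPdef
    have hfac : ∀ i : Fin (m+3), aN (i:ℕ) ∣ (C:ℤ) * (y*(y-1))^(2*m+1) := by
      intro i
      by_cases h : (i:ℕ) ≤ m
      · rw [haN_le _ h]
        apply mul_dvd_mul
        · exact_mod_cast Int.natCast_dvd_natCast.mpr
            (Finset.dvd_prod_of_mem _ (Finset.mem_range.mpr (by omega)))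
        · rw [show t = y * (y-1) from by rw [htdef]; ring]
          exact pow_dvd_pow _ (by omega)
      · by_cases h2 : (i:ℕ) = m+1
        · rw [h2, haN_m1]
          apply Dvd.dvd.mul_left
          rw [mul_pow]
          exact dvd_mul_left _ _
        · have h3 : (i:ℕ) = m+2 := by have := i.isLt; omega
          rw [h3, haN_last, neg_dvd]
          apply Dvd.dvd.mul_left
          rw [mul_pow]
          exact dvd_mul_right _ _
    have hPdvd : P ∣ ((C:ℤ) * (y*(y-1))^(2*m+1))^(m+3) := by
      have h := Finset.prod_dvd_prod_of_dvd (s := (Finset.univ : Finset (Fin (m+3))))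
        (fun i => aN (i:ℕ)) (fun _ => (C:ℤ) * (y*(y-1))^(2*m+1)) (fun i _ => hfac i)
      rwa [Finset.prod_const, Finset.card_univ, Fintype.card_fin] at h
    have h2k1 : (1:ℕ) ≤ 2^k := Nat.one_le_two_pow
    have hyabs : y.natAbs = 2^k := by rw [hydef, Int.natAbs_pow]; rfl
    have hy1 : (y-1).natAbs = 2^k - 1 := by
      have hcast : y - 1 = ((2^k - 1 : ℕ) : ℤ) := by
        rw [Nat.cast_sub h2k1, hydef]
        push_cast
        ring
      rw [hcast, Int.natAbs_natCast]
    have hW_ne : (C * (2^k * (2^k-1))^(2*m+1)) ≠ 0 := by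
      have hpos : 0 < 2^k * (2^k-1) := by
        have : 1 ≤ 2^k - 1 := by omega
        exact Nat.mul_pos (by omega) (by omega)
      exact Nat.mul_ne_zero (by omega) (pow_ne_zero _ hpos.ne')
    have hrad : rad (gNorm (∏ i, a i)) ≤ D * 2^k := by
      rw [hprod, gNorm_intCast, rad_pow 2 two_ne_zero]
      have hdvdN : P.natAbs ∣ (C * (2^k * (2^k-1))^(2*m+1))^(m+3) := by
        have h := Int.natAbs_dvd_natAbs.mpr hPdvd
        rwa [Int.natAbs_pow, Int.natAbs_mul, Int.natAbs_pow, Int.natAbs_mul,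
          Int.natAbs_natCast, hyabs, hy1] at h
      have hbne : (2:ℕ)^k * (2^k-1) ≠ 0 := by
        have : 1 ≤ 2^k - 1 := by omega
        exact Nat.mul_ne_zero (by omega) (by omega)
      calc rad P.natAbs ≤ rad ((C * (2^k * (2^k-1))^(2*m+1))^(m+3)) :=
            rad_le_of_dvd (pow_ne_zero _ hW_ne) hdvdN
      _ = rad (C * (2^k * (2^k-1))^(2*m+1)) := rad_pow _ (by omega)
      _ ≤ rad C * rad ((2^k * (2^k-1))^(2*m+1)) :=
            rad_mul_le (by omega) (pow_ne_zero _ hbne)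
      _ = rad C * rad (2^k * (2^k-1)) := by rw [rad_pow _ (by omega)]
      _ ≤ rad C * (rad (2^k) * rad (2^k-1)) :=
            Nat.mul_le_mul le_rfl (rad_mul_le (by omega) (by omega))
      _ = rad C * (2 * rad (2^k-1)) := by rw [rad_two_pow (by omega)]
      _ ≤ C * (2 * (2^k-1)) :=
            Nat.mul_le_mul (rad_le_self (by omega))
              (Nat.mul_le_mul le_rfl (rad_le_self (by omega)))
      _ ≤ C * (2 * 2^k) := Nat.mul_le_mul le_rfl (Nat.mul_le_mul le_rfl (Nat.sub_le _ _))
      _ = D * 2^k := by rw [hDdef]; ring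
    set S : ℕ := Finset.univ.sup (fun i => gNorm (a i)) with hSdef
    have hS1 : 1 ≤ S := le_trans Nat.one_le_two_pow hsup_ge
    have hlogS0 : 0 ≤ Real.log S := Real.log_nonneg (by exact_mod_cast hS1)
    have hlograd0 : 0 ≤ Real.log (rad (gNorm (∏ i, a i))) :=
      Real.log_nonneg (by exact_mod_cast rad_one_le _)
    have hgoalQ : (4*(((m+3):ℕ):ℝ) - 10 - ε) = (4*((m:ℝ)+3) - 10) - ε := by push_cast; ring
    rw [hgoalQ]
    set Q : ℝ := 4*((m:ℝ)+3) - 10 with hQdef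
    rcases le_or_gt (Q - ε) 0 with hq | hq
    · exact le_trans (mul_nonpos_iff.mpr (Or.inr ⟨hq, hlograd0⟩)) hlogS0
    · have hlogrl : Real.log (rad (gNorm (∏ i, a i))) ≤ Real.log D + k * Real.log 2 := by
        have hpos1 : (0:ℝ) < ((rad (gNorm (∏ i, a i)) : ℕ) : ℝ) := by
          exact_mod_cast Nat.lt_of_lt_of_le Nat.zero_lt_one (rad_one_le _)
        have hle1 : ((rad (gNorm (∏ i, a i)) : ℕ) : ℝ) ≤ ((D * 2^k : ℕ) : ℝ) := by
          exact_mod_cast hrad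
        calc Real.log (rad (gNorm (∏ i, a i))) ≤ Real.log ((D * 2^k : ℕ) : ℝ) :=
              Real.log_le_log hpos1 hle1
        _ = Real.log D + k * Real.log 2 := by
              push_cast
              rw [Real.log_mul (by positivity) (by positivity), Real.log_pow]
      have hlogS : (k:ℝ) * Q * Real.log 2 ≤ Real.log S := by
        have hsupR : ((2:ℝ))^(k*(4*(m+3)-10)) ≤ (S:ℝ) := by exact_mod_cast hsup_ge
        have h := Real.log_le_log (by positivity) hsupR
        rw [Real.log_pow] at h
        refine le_trans (le_of_eq ?_) h
        rw [show 4*(m+3)-10 = 4*m+2 by omega]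
        push_cast
        rw [hQdef]
        ring
      have hkR : Q * Real.log D ≤ ε * k * Real.log 2 := by
        have h1 : Q * Real.log D / (ε * Real.log 2) ≤ (k:ℝ) :=
          le_trans hK (Nat.cast_le.mpr hkK)
        rw [div_le_iff₀ (by positivity)] at h1
        calc Q * Real.log D ≤ (k:ℝ) * (ε * Real.log 2) := h1
        _ = ε * k * Real.log 2 := by ring
      calc (Q - ε) * Real.log (rad (gNorm (∏ i, a i)))
          ≤ (Q - ε) * (Real.log D + k * Real.log 2) :=
            mul_le_mul_of_nonneg_left hlogrl hq.le
      _ ≤ (k:ℝ) * Q * Real.log 2 := by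
            have e1 : (Q-ε) * Real.log D ≤ Q * Real.log D :=
              mul_le_mul_of_nonneg_right (by linarith) hlogD
            have e2 : (Q-ε) * (Real.log D + k * Real.log 2)
                = (Q-ε) * Real.log D + ((k:ℝ) * Q * Real.log 2 - ε * k * Real.log 2) := by ring
            rw [e2]
            linarith [e1, hkR]
      _ ≤ Real.log S := hlogS
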